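/- The automaton group of automaton 882 is non-contracting: g = acacbc satisfies g(11) = 11, g|_{11} = g, and g has infinite order. -/

import Mathlib

namespace Stmt10


/-- A Mealy automaton over the binary alphabet with state set `S`. -/
structure Mealy (S : Type) where
  /-- transition function -/
  δ : S → Bool → S
  /-- output function -/
  τ : S → Bool → Bool

namespace Mealy

variable {S : Type} (M : Mealy S)

/-- The state reached from `q` after reading the first `n` letters of `w`. -/
def stateAt (q : S) (w : ℕ → Bool) : ℕ → S
  | 0 => q
  | n + 1 => M.δ (stateAt q w n) (w n)

/-- The action of state `q` on infinite words. -/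
def act (q : S) (w : ℕ → Bool) : ℕ → Bool :=
  fun n => M.τ (M.stateAt q w n) (w n)

/-- The inverse automaton (for automata whose output functions are involutions). -/
def inv : Mealy S := ⟨fun q b => M.δ q (M.τ q b), M.τ⟩

theorem stateAt_inv_act (h : ∀ q b, M.τ q (M.τ q b) = b) (q : S) (w : ℕ → Bool) :
    ∀ n, M.inv.stateAt q (M.act q w) n = M.stateAt q w n := by
  intro n
  induction n with
  | zero => rfl
  | succ n ih =>
    show M.inv.δ (M.inv.stateAt q (M.act q w) n) (M.act q w n) = M.δ (M.stateAt q w n) (w n)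
    rw [ih]
    show M.δ (M.stateAt q w n) (M.τ (M.stateAt q w n) (M.τ (M.stateAt q w n) (w n))) = _
    rw [h]

theorem inv_act (h : ∀ q b, M.τ q (M.τ q b) = b) (q : S) (w : ℕ → Bool) :
    M.inv.act q (M.act q w) = w := by
  funext n
  show M.inv.τ (M.inv.stateAt q (M.act q w) n) (M.act q w n) = w n
  rw [stateAt_inv_act M h]
  show M.τ (M.stateAt q w n) (M.τ (M.stateAt q w n) (w n)) = w n
  rw [h]

theorem inv_inv (h : ∀ q b, M.τ q (M.τ q b) = b) : M.inv.inv = M := by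
  obtain ⟨d, t⟩ := M
  simp only [inv]
  congr 1
  funext q b
  exact congrArg (d q) (h q b)

/-- The permutation of the set of infinite binary words defined by state `q`. -/
def perm (h : ∀ q b, M.τ q (M.τ q b) = b) (q : S) : Equiv.Perm (ℕ → Bool) where
  toFun := M.act q
  invFun := M.inv.act q
  left_inv := fun w => M.inv_act h q w
  right_inv := fun w => by
    have h2 : ∀ q b, M.inv.τ q (M.inv.τ q b) = b := h
    have := M.inv.inv_act h2 q w
    rwa [M.inv_inv h] at this

end Mealy

/-- Prepend a finite word to an infinite word. -/
def cat (u : List Bool) (w : ℕ → Bool) : ℕ → Bool :=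
  fun n => u.getD n (w (n - u.length))

/-- The (semantic) restriction of a transformation of infinite words to the
subtree indexed by the finite word `u`. -/
def resW (f : (ℕ → Bool) → ℕ → Bool) (u : List Bool) : (ℕ → Bool) → ℕ → Bool :=
  fun w n => f (cat u w) (n + u.length)

/-- The periodic infinite word with period `u`. -/
def per (u : List Bool) : ℕ → Bool := fun n => u.getD (n % u.length) false

/-- Left-shift equivalence of infinite words: they share a common infinite tail. -/
def seq (u v : ℕ → Bool) : Prop := ∃ k l : ℕ, ∀ n, u (n + k) = v (n + l)

inductive St : Type
  | a | b | c
deriving DecidableEq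

instance : Fintype St := ⟨{St.a, St.b, St.c}, fun x => by cases x <;> simp⟩

/-- Automaton 882. -/
def M : Mealy St where
  δ := fun q x => match q, x with
    | .a, false => .c | .a, true => .c
    | .b, false => .b | .b, true => .c
    | .c, false => .b | .c, true => .a
  τ := fun q x => match q with
    | .a => !x
    | .b => x
    | .c => x

theorem M_inv : ∀ q x, M.τ q (M.τ q x) = x := by decide

/-- The automorphism of the binary tree boundary defined by state `a`. -/
def a : Equiv.Perm (ℕ → Bool) := M.perm M_inv .a

/-- The automorphism of the binary tree boundary defined by state `b`. -/
def b : Equiv.Perm (ℕ → Bool) := M.perm M_inv .b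

/-- The automorphism of the binary tree boundary defined by state `c`. -/
def c : Equiv.Perm (ℕ → Bool) := M.perm M_inv .c

/-! ### Auxiliary machinery -/

/-- shift an infinite word by one. -/
def shift (w : ℕ → Bool) : ℕ → Bool := fun n => w (n + 1)

/-- step a list of states (applied head-first) on a single input letter. -/
def step : List St → Bool → List St × Bool
  | [], x => ([], x)
  | q :: L, x => let r := step L (M.τ q x); (M.δ q x :: r.1, r.2)

/-- action of a list of states, head applied first. -/
def actL : List St → (ℕ → Bool) → ℕ → Bool
  | [], w => w
  | q :: L, w => actL L (M.act q w)

theorem stateAt_shift (q : St) (w : ℕ → Bool) :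
    ∀ n, M.stateAt q w (n + 1) = M.stateAt (M.δ q (w 0)) (shift w) n := by
  intro n
  induction n with
  | zero => rfl
  | succ n ih =>
    show M.δ (M.stateAt q w (n+1)) (w (n+1)) = M.δ (M.stateAt _ (shift w) n) (shift w n)
    rw [ih]; rfl

theorem act_zero (q : St) (w : ℕ → Bool) : M.act q w 0 = M.τ q (w 0) := rfl

theorem act_succ (q : St) (w : ℕ → Bool) (n : ℕ) :
    M.act q w (n + 1) = M.act (M.δ q (w 0)) (shift w) n := by
  show M.τ (M.stateAt q w (n+1)) (w (n+1)) = M.τ (M.stateAt _ (shift w) n) (shift w n)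
  rw [stateAt_shift]; rfl

theorem shift_act (q : St) (w : ℕ → Bool) :
    shift (M.act q w) = M.act (M.δ q (w 0)) (shift w) :=
  funext fun n => act_succ q w n

theorem actL_zero : ∀ (L : List St) (w : ℕ → Bool), actL L w 0 = (step L (w 0)).2 := by
  intro L
  induction L with
  | nil => intro w; rfl
  | cons q L ih =>
    intro w
    show actL L (M.act q w) 0 = _
    rw [ih]; rfl

theorem actL_succ : ∀ (L : List St) (w : ℕ → Bool) (n : ℕ),
    actL L w (n + 1) = actL (step L (w 0)).1 (shift w) n := by
  intro L
  induction L with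
  | nil => intro w n; rfl
  | cons q L ih =>
    intro w n
    show actL L (M.act q w) (n+1) = _
    rw [ih, shift_act]
    rfl

theorem actL_append : ∀ (L1 L2 : List St) (w : ℕ → Bool),
    actL (L1 ++ L2) w = actL L2 (actL L1 w) := by
  intro L1
  induction L1 with
  | nil => intro L2 w; rfl
  | cons q L ih => intro L2 w; exact ih L2 (M.act q w)

/-! ### cat lemmas -/

theorem cat_zero (x : Bool) (u : List Bool) (w : ℕ → Bool) : cat (x :: u) w 0 = x := rfl

theorem cat_succ (x : Bool) (u : List Bool) (w : ℕ → Bool) (n : ℕ) :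
    cat (x :: u) w (n + 1) = cat u w n := by
  show (x :: u).getD (n+1) (w (n + 1 - (u.length + 1))) = u.getD n (w (n - u.length))
  rw [Nat.succ_sub_succ]
  rfl

theorem cat_nil (w : ℕ → Bool) : cat [] w = w := by
  funext n
  show ([] : List Bool).getD n (w (n - 0)) = w n
  rfl

theorem cat_append (u v : List Bool) (w : ℕ → Bool) :
    cat (u ++ v) w = cat u (cat v w) := by
  induction u with
  | nil => rw [cat_nil]; rfl
  | cons x u ih =>
    funext n
    cases n with
    | zero => rfl
    | succ n =>
      show cat (x :: (u ++ v)) w (n+1) = cat (x :: u) (cat v w) (n+1)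
      rw [cat_succ, cat_succ, ih]

theorem cat2_two (x y : Bool) (w : ℕ → Bool) (n : ℕ) : cat [x, y] w (n + 2) = w n := by
  rw [show n + 2 = (n + 1) + 1 from rfl, cat_succ, cat_succ]
  show ([] : List Bool).getD n (w (n - 0)) = w n
  rfl

theorem shift_shift_cat2 (x y : Bool) (w : ℕ → Bool) :
    shift (shift (cat [x, y] w)) = w :=
  funext fun n => cat2_two x y w n

theorem cat2_inj {x y : Bool} {u v : ℕ → Bool} (h : cat [x, y] u = cat [x, y] v) : u = v := by
  funext n
  have := congrFun h (n + 2)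
  rwa [cat2_two, cat2_two] at this

/-- the key two-letter restriction formula. -/
theorem actL_cat2 (L : List St) (x y : Bool) (w : ℕ → Bool) :
    actL L (cat [x, y] w) =
      cat [(step L x).2, (step (step L x).1 y).2] (actL (step (step L x).1 y).1 w) := by
  funext n
  match n with
  | 0 => rw [actL_zero]; rfl
  | 1 =>
    rw [show (1 : ℕ) = 0 + 1 from rfl, actL_succ, actL_zero]
    have h0 : cat [x, y] w 0 = x := rfl
    have h1 : shift (cat [x, y] w) 0 = y := rfl
    rw [h0, h1]; rfl
  | (n+2) =>
    rw [show n + 2 = (n + 1) + 1 from rfl, actL_succ, actL_succ, cat2_two]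
    have h0 : cat [x, y] w 0 = x := rfl
    have h1 : shift (cat [x, y] w) 0 = y := rfl
    rw [h0, h1, shift_shift_cat2]

/-! ### bisimulation -/

theorem bisim (R : List (List St × List St))
    (hcl : ∀ p ∈ R, ∀ x : Bool,
      (step p.1 x).2 = (step p.2 x).2 ∧ ((step p.1 x).1, (step p.2 x).1) ∈ R) :
    ∀ n, ∀ p ∈ R, ∀ w, actL p.1 w n = actL p.2 w n := by
  intro n
  induction n with
  | zero =>
    intro p hp w
    rw [actL_zero, actL_zero, (hcl p hp (w 0)).1]
  | succ n ih =>
    intro p hp w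
    rw [actL_succ, actL_succ]
    exact ih _ (hcl p hp (w 0)).2 (shift w)

/-! ### the concrete element -/

def gL : List St := [St.c, St.b, St.c, St.a, St.c, St.a]
def R : List (List St × List St) := [
  ([St.b, St.b, St.b, St.b, St.b, St.b, St.c, St.c, St.c, St.a, St.c, St.c, St.c, St.c, St.c, St.c, St.c, St.a, St.c, St.c, St.c, St.b, St.b, St.b], [St.b, St.b, St.b, St.b, St.c, St.a, St.c, St.c, St.c, St.a, St.c, St.b]),
  ([St.c, St.c, St.c, St.c, St.c, St.c, St.a, St.a, St.a, St.c, St.b, St.b, St.b, St.b, St.b, St.b, St.b, St.c, St.a, St.a, St.a, St.c, St.c, St.c], [St.c, St.c, St.c, St.c, St.a, St.c, St.b, St.b, St.b, St.c, St.a, St.c]),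
  ([St.a, St.a, St.a, St.a, St.a, St.a, St.c, St.c, St.c, St.b, St.b, St.b, St.b, St.b, St.b, St.b, St.b, St.b, St.c, St.c, St.c, St.a, St.a, St.a], [St.a, St.a, St.a, St.a, St.c, St.b, St.b, St.b, St.b, St.b, St.c, St.a]),
  ([St.c, St.c, St.c, St.c, St.c, St.c, St.a, St.a, St.a, St.c, St.c, St.c, St.c, St.c, St.c, St.c, St.c, St.c, St.a, St.a, St.a, St.c, St.c, St.c], [St.c, St.c, St.c, St.c, St.a, St.c, St.c, St.c, St.c, St.c, St.a, St.c]),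
  ([St.b, St.b, St.b, St.b, St.b, St.b, St.c, St.c, St.c, St.a, St.a, St.a, St.a, St.a, St.a, St.a, St.a, St.a, St.c, St.c, St.c, St.b, St.b, St.b], [St.b, St.b, St.b, St.b, St.c, St.a, St.a, St.a, St.a, St.a, St.c, St.b]),
  ([St.c, St.c, St.c, St.c, St.c, St.c, St.a, St.a, St.a, St.c, St.c, St.c, St.c, St.c, St.c, St.c, St.c, St.c, St.b, St.b, St.b, St.b, St.b, St.b], [St.c, St.c, St.c, St.c, St.a, St.c, St.c, St.c, St.c, St.c, St.b, St.b]),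
  ([St.a, St.a, St.a, St.a, St.a, St.a, St.c, St.c, St.c, St.b, St.b, St.b, St.b, St.b, St.b, St.b, St.b, St.b, St.b, St.b, St.b, St.b, St.b, St.b], [St.a, St.a, St.a, St.a, St.c, St.b, St.b, St.b, St.b, St.b, St.b, St.b]),
  ([St.c, St.c, St.c, St.c, St.c, St.c, St.a, St.a, St.a, St.c, St.c, St.c, St.c, St.c, St.c, St.c, St.c, St.c, St.c, St.c, St.c, St.c, St.c, St.c], [St.c, St.c, St.c, St.c, St.a, St.c, St.c, St.c, St.c, St.c, St.c, St.c]),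
  ([St.b, St.b, St.b, St.b, St.b, St.b, St.c, St.c, St.c, St.a, St.a, St.a, St.a, St.a, St.a, St.a, St.a, St.a, St.a, St.a, St.a, St.a, St.a, St.a], [St.b, St.b, St.b, St.b, St.c, St.a, St.a, St.a, St.a, St.a, St.a, St.a]),
  ([St.b, St.b, St.b, St.b, St.b, St.b, St.b, St.b, St.b, St.c, St.c, St.c, St.c, St.c, St.c, St.c, St.c, St.c, St.c, St.c, St.c, St.c, St.c, St.c], [St.b, St.b, St.b, St.b, St.b, St.c, St.c, St.c, St.c, St.c, St.c, St.c]),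
  ([St.c, St.c, St.c, St.c, St.c, St.c, St.c, St.c, St.c, St.a, St.a, St.a, St.a, St.a, St.a, St.a, St.a, St.a, St.a, St.a, St.a, St.a, St.a, St.a], [St.c, St.c, St.c, St.c, St.c, St.a, St.a, St.a, St.a, St.a, St.a, St.a]),
  ([St.a, St.a, St.a, St.a, St.a, St.a, St.a, St.a, St.a, St.c, St.c, St.c, St.c, St.c, St.c, St.c, St.c, St.c, St.c, St.c, St.c, St.c, St.c, St.c], [St.a, St.a, St.a, St.a, St.a, St.c, St.c, St.c, St.c, St.c, St.c, St.c]),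
  ([St.c, St.c, St.c, St.c, St.c, St.c, St.c, St.c, St.c, St.b, St.b, St.b, St.b, St.b, St.b, St.b, St.b, St.b, St.b, St.b, St.b, St.b, St.b, St.b], [St.c, St.c, St.c, St.c, St.c, St.b, St.b, St.b, St.b, St.b, St.b, St.b]),
  ([St.b, St.b, St.b, St.b, St.b, St.b, St.b, St.b, St.b, St.b, St.b, St.b, St.b, St.b, St.b, St.b, St.b, St.b, St.b, St.b, St.b, St.b, St.b, St.b], [St.b, St.b, St.b, St.b, St.b, St.b, St.b, St.b, St.b, St.b, St.b, St.b]),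
  ([St.c, St.c, St.c, St.c, St.c, St.c, St.c, St.c, St.c, St.c, St.c, St.c, St.c, St.c, St.c, St.c, St.c, St.c, St.c, St.c, St.c, St.c, St.c, St.c], [St.c, St.c, St.c, St.c, St.c, St.c, St.c, St.c, St.c, St.c, St.c, St.c]),
  ([St.a, St.a, St.a, St.a, St.a, St.a, St.a, St.a, St.a, St.a, St.a, St.a, St.a, St.a, St.a, St.a, St.a, St.a, St.a, St.a, St.a, St.a, St.a, St.a], [St.a, St.a, St.a, St.a, St.a, St.a, St.a, St.a, St.a, St.a, St.a, St.a]),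
  ([St.c, St.c, St.c, St.c, St.c, St.c, St.b, St.b, St.b, St.b, St.b, St.b, St.b, St.b, St.b, St.b, St.b, St.b, St.b, St.b, St.b, St.b, St.b, St.b], [St.c, St.c, St.c, St.c, St.b, St.b, St.b, St.b, St.b, St.b, St.b, St.b]),
  ([St.a, St.a, St.a, St.a, St.a, St.a, St.c, St.c, St.c, St.c, St.c, St.c, St.c, St.c, St.c, St.c, St.c, St.c, St.c, St.c, St.c, St.c, St.c, St.c], [St.a, St.a, St.a, St.a, St.c, St.c, St.c, St.c, St.c, St.c, St.c, St.c]),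
  ([St.c, St.c, St.c, St.c, St.c, St.c, St.a, St.a, St.a, St.a, St.a, St.a, St.a, St.a, St.a, St.a, St.a, St.a, St.a, St.a, St.a, St.a, St.a, St.a], [St.c, St.c, St.c, St.c, St.a, St.a, St.a, St.a, St.a, St.a, St.a, St.a]),
  ([St.b, St.b, St.b, St.b, St.b, St.b, St.c, St.c, St.c, St.c, St.c, St.c, St.c, St.c, St.c, St.c, St.c, St.c, St.c, St.c, St.c, St.c, St.c, St.c], [St.b, St.b, St.b, St.b, St.c, St.c, St.c, St.c, St.c, St.c, St.c, St.c]),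
  ([St.b, St.b, St.b, St.b, St.b, St.b, St.c, St.c, St.c, St.a, St.a, St.a, St.a, St.a, St.a, St.a, St.a, St.a, St.c, St.c, St.c, St.c, St.c, St.c], [St.b, St.b, St.b, St.b, St.c, St.a, St.a, St.a, St.a, St.a, St.c, St.c]),
  ([St.b, St.b, St.b, St.b, St.b, St.b, St.b, St.b, St.b, St.c, St.c, St.c, St.c, St.c, St.c, St.c, St.c, St.c, St.a, St.a, St.a, St.a, St.a, St.a], [St.b, St.b, St.b, St.b, St.b, St.c, St.c, St.c, St.c, St.c, St.a, St.a]),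
  ([St.c, St.c, St.c, St.c, St.c, St.c, St.c, St.c, St.c, St.a, St.a, St.a, St.a, St.a, St.a, St.a, St.a, St.a, St.c, St.c, St.c, St.c, St.c, St.c], [St.c, St.c, St.c, St.c, St.c, St.a, St.a, St.a, St.a, St.a, St.c, St.c]),
  ([St.a, St.a, St.a, St.a, St.a, St.a, St.a, St.a, St.a, St.c, St.c, St.c, St.c, St.c, St.c, St.c, St.c, St.c, St.b, St.b, St.b, St.b, St.b, St.b], [St.a, St.a, St.a, St.a, St.a, St.c, St.c, St.c, St.c, St.c, St.b, St.b]),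
  ([St.b, St.b, St.b, St.b, St.b, St.b, St.b, St.b, St.b, St.b, St.b, St.b, St.b, St.b, St.b, St.b, St.b, St.b, St.c, St.c, St.c, St.c, St.c, St.c], [St.b, St.b, St.b, St.b, St.b, St.b, St.b, St.b, St.b, St.b, St.c, St.c]),
  ([St.c, St.c, St.c, St.c, St.c, St.c, St.c, St.c, St.c, St.c, St.c, St.c, St.c, St.c, St.c, St.c, St.c, St.c, St.a, St.a, St.a, St.a, St.a, St.a], [St.c, St.c, St.c, St.c, St.c, St.c, St.c, St.c, St.c, St.c, St.a, St.a]),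
  ([St.a, St.a, St.a, St.a, St.a, St.a, St.a, St.a, St.a, St.a, St.a, St.a, St.a, St.a, St.a, St.a, St.a, St.a, St.c, St.c, St.c, St.c, St.c, St.c], [St.a, St.a, St.a, St.a, St.a, St.a, St.a, St.a, St.a, St.a, St.c, St.c]),
  ([St.c, St.c, St.c, St.c, St.c, St.c, St.c, St.c, St.c, St.c, St.c, St.c, St.c, St.c, St.c, St.c, St.c, St.c, St.b, St.b, St.b, St.b, St.b, St.b], [St.c, St.c, St.c, St.c, St.c, St.c, St.c, St.c, St.c, St.c, St.b, St.b]),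
  ([St.b, St.b, St.b, St.b, St.b, St.b, St.b, St.b, St.b, St.c, St.c, St.c, St.c, St.c, St.c, St.c, St.c, St.c, St.a, St.a, St.a, St.c, St.c, St.c], [St.b, St.b, St.b, St.b, St.b, St.c, St.c, St.c, St.c, St.c, St.a, St.c]),
  ([St.c, St.c, St.c, St.c, St.c, St.c, St.c, St.c, St.c, St.a, St.a, St.a, St.a, St.a, St.a, St.a, St.a, St.a, St.c, St.c, St.c, St.b, St.b, St.b], [St.c, St.c, St.c, St.c, St.c, St.a, St.a, St.a, St.a, St.a, St.c, St.b]),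
  ([St.b, St.b, St.b, St.b, St.b, St.b, St.b, St.b, St.b, St.b, St.b, St.b, St.b, St.b, St.b, St.b, St.b, St.b, St.c, St.c, St.c, St.a, St.a, St.a], [St.b, St.b, St.b, St.b, St.b, St.b, St.b, St.b, St.b, St.b, St.c, St.a]),
  ([St.c, St.c, St.c, St.c, St.c, St.c, St.c, St.c, St.c, St.c, St.c, St.c, St.c, St.c, St.c, St.c, St.c, St.c, St.a, St.a, St.a, St.c, St.c, St.c], [St.c, St.c, St.c, St.c, St.c, St.c, St.c, St.c, St.c, St.c, St.a, St.c]),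
  ([St.a, St.a, St.a, St.a, St.a, St.a, St.a, St.a, St.a, St.a, St.a, St.a, St.a, St.a, St.a, St.a, St.a, St.a, St.c, St.c, St.c, St.b, St.b, St.b], [St.a, St.a, St.a, St.a, St.a, St.a, St.a, St.a, St.a, St.a, St.c, St.b]),
  ([St.b, St.b, St.b, St.b, St.b, St.b, St.b, St.b, St.b, St.b, St.b, St.b, St.b, St.b, St.b, St.b, St.b, St.b, St.b, St.b, St.b, St.c, St.c, St.c], [St.b, St.b, St.b, St.b, St.b, St.b, St.b, St.b, St.b, St.b, St.b, St.c]),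
  ([St.c, St.c, St.c, St.c, St.c, St.c, St.c, St.c, St.c, St.c, St.c, St.c, St.c, St.c, St.c, St.c, St.c, St.c, St.c, St.c, St.c, St.a, St.a, St.a], [St.c, St.c, St.c, St.c, St.c, St.c, St.c, St.c, St.c, St.c, St.c, St.a]),
  ([St.a, St.a, St.a, St.a, St.a, St.a, St.a, St.a, St.a, St.a, St.a, St.a, St.a, St.a, St.a, St.a, St.a, St.a, St.a, St.a, St.a, St.c, St.c, St.c], [St.a, St.a, St.a, St.a, St.a, St.a, St.a, St.a, St.a, St.a, St.a, St.c]),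
  ([St.c, St.c, St.c, St.c, St.c, St.c, St.c, St.c, St.c, St.c, St.c, St.c, St.c, St.c, St.c, St.c, St.c, St.c, St.c, St.c, St.c, St.b, St.b, St.b], [St.c, St.c, St.c, St.c, St.c, St.c, St.c, St.c, St.c, St.c, St.c, St.b]),
  ([St.c, St.c, St.c, St.c, St.c, St.c, St.b, St.b, St.b, St.b, St.b, St.b, St.b, St.b, St.b, St.b, St.b, St.b, St.b, St.b, St.b, St.c, St.c, St.c], [St.c, St.c, St.c, St.c, St.b, St.b, St.b, St.b, St.b, St.b, St.b, St.c]),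
  ([St.a, St.a, St.a, St.a, St.a, St.a, St.c, St.c, St.c, St.c, St.c, St.c, St.c, St.c, St.c, St.c, St.c, St.c, St.c, St.c, St.c, St.a, St.a, St.a], [St.a, St.a, St.a, St.a, St.c, St.c, St.c, St.c, St.c, St.c, St.c, St.a]),
  ([St.c, St.c, St.c, St.c, St.c, St.c, St.a, St.a, St.a, St.a, St.a, St.a, St.a, St.a, St.a, St.a, St.a, St.a, St.a, St.a, St.a, St.c, St.c, St.c], [St.c, St.c, St.c, St.c, St.a, St.a, St.a, St.a, St.a, St.a, St.a, St.c]),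
  ([St.a, St.a, St.a, St.a, St.a, St.a, St.c, St.c, St.c, St.c, St.c, St.c, St.c, St.c, St.c, St.c, St.c, St.c, St.c, St.c, St.c, St.b, St.b, St.b], [St.a, St.a, St.a, St.a, St.c, St.c, St.c, St.c, St.c, St.c, St.c, St.b]),
  ([St.b, St.b, St.b, St.b, St.b, St.b, St.c, St.c, St.c, St.c, St.c, St.c, St.c, St.c, St.c, St.c, St.c, St.c, St.c, St.c, St.c, St.a, St.a, St.a], [St.b, St.b, St.b, St.b, St.c, St.c, St.c, St.c, St.c, St.c, St.c, St.a]),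
  ([St.b, St.b, St.b, St.b, St.b, St.b, St.b, St.b, St.b, St.c, St.a, St.a, St.a, St.a, St.a, St.a, St.a, St.c, St.b, St.b, St.b, St.b, St.b, St.b], [St.b, St.b, St.b, St.b, St.b, St.c, St.a, St.a, St.a, St.c, St.b, St.b]),
  ([St.c, St.c, St.c, St.c, St.c, St.c, St.c, St.c, St.c, St.a, St.c, St.c, St.c, St.c, St.c, St.c, St.c, St.b, St.b, St.b, St.b, St.b, St.b, St.b], [St.c, St.c, St.c, St.c, St.c, St.a, St.c, St.c, St.c, St.b, St.b, St.b]),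
  ([St.a, St.a, St.a, St.a, St.a, St.a, St.a, St.a, St.a, St.c, St.b, St.b, St.b, St.b, St.b, St.b, St.b, St.b, St.b, St.b, St.b, St.b, St.b, St.b], [St.a, St.a, St.a, St.a, St.a, St.c, St.b, St.b, St.b, St.b, St.b, St.b]),
  ([St.c, St.c, St.c, St.c, St.c, St.c, St.c, St.c, St.c, St.a, St.c, St.c, St.c, St.c, St.c, St.c, St.c, St.c, St.c, St.c, St.c, St.c, St.c, St.c], [St.c, St.c, St.c, St.c, St.c, St.a, St.c, St.c, St.c, St.c, St.c, St.c]),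
  ([St.b, St.b, St.b, St.b, St.b, St.b, St.b, St.b, St.b, St.c, St.a, St.a, St.a, St.a, St.a, St.a, St.a, St.a, St.a, St.a, St.a, St.a, St.a, St.a], [St.b, St.b, St.b, St.b, St.b, St.c, St.a, St.a, St.a, St.a, St.a, St.a]),
  ([St.b, St.b, St.b, St.b, St.b, St.b, St.b, St.b, St.b, St.b, St.c, St.c, St.c, St.c, St.c, St.c, St.c, St.c, St.c, St.c, St.c, St.c, St.c, St.c], [St.b, St.b, St.b, St.b, St.b, St.b, St.c, St.c, St.c, St.c, St.c, St.c]),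
  ([St.c, St.c, St.c, St.c, St.c, St.c, St.c, St.c, St.c, St.c, St.a, St.a, St.a, St.a, St.a, St.a, St.a, St.a, St.a, St.a, St.a, St.a, St.a, St.a], [St.c, St.c, St.c, St.c, St.c, St.c, St.a, St.a, St.a, St.a, St.a, St.a]),
  ([St.a, St.a, St.a, St.a, St.a, St.a, St.a, St.a, St.a, St.a, St.c, St.c, St.c, St.c, St.c, St.c, St.c, St.c, St.c, St.c, St.c, St.c, St.c, St.c], [St.a, St.a, St.a, St.a, St.a, St.a, St.c, St.c, St.c, St.c, St.c, St.c]),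
  ([St.c, St.c, St.c, St.c, St.c, St.c, St.c, St.c, St.c, St.c, St.b, St.b, St.b, St.b, St.b, St.b, St.b, St.b, St.b, St.b, St.b, St.b, St.b, St.b], [St.c, St.c, St.c, St.c, St.c, St.c, St.b, St.b, St.b, St.b, St.b, St.b]),
  ([St.b, St.b, St.b, St.b, St.b, St.b, St.b, St.b, St.b, St.c, St.a, St.a, St.a, St.a, St.a, St.a, St.a, St.c, St.c, St.c, St.c, St.c, St.c, St.c], [St.b, St.b, St.b, St.b, St.b, St.c, St.a, St.a, St.a, St.c, St.c, St.c]),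
  ([St.b, St.b, St.b, St.b, St.b, St.b, St.b, St.b, St.b, St.b, St.c, St.c, St.c, St.c, St.c, St.c, St.c, St.a, St.a, St.a, St.a, St.a, St.a, St.a], [St.b, St.b, St.b, St.b, St.b, St.b, St.c, St.c, St.c, St.a, St.a, St.a]),
  ([St.c, St.c, St.c, St.c, St.c, St.c, St.c, St.c, St.c, St.c, St.a, St.a, St.a, St.a, St.a, St.a, St.a, St.c, St.c, St.c, St.c, St.c, St.c, St.c], [St.c, St.c, St.c, St.c, St.c, St.c, St.a, St.a, St.a, St.c, St.c, St.c]),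
  ([St.a, St.a, St.a, St.a, St.a, St.a, St.a, St.a, St.a, St.a, St.c, St.c, St.c, St.c, St.c, St.c, St.c, St.b, St.b, St.b, St.b, St.b, St.b, St.b], [St.a, St.a, St.a, St.a, St.a, St.a, St.c, St.c, St.c, St.b, St.b, St.b]),
  ([St.b, St.b, St.b, St.b, St.b, St.b, St.b, St.b, St.b, St.b, St.b, St.b, St.b, St.b, St.b, St.b, St.b, St.c, St.c, St.c, St.c, St.c, St.c, St.c], [St.b, St.b, St.b, St.b, St.b, St.b, St.b, St.b, St.b, St.c, St.c, St.c]),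
  ([St.c, St.c, St.c, St.c, St.c, St.c, St.c, St.c, St.c, St.c, St.c, St.c, St.c, St.c, St.c, St.c, St.c, St.a, St.a, St.a, St.a, St.a, St.a, St.a], [St.c, St.c, St.c, St.c, St.c, St.c, St.c, St.c, St.c, St.a, St.a, St.a]),
  ([St.a, St.a, St.a, St.a, St.a, St.a, St.a, St.a, St.a, St.a, St.a, St.a, St.a, St.a, St.a, St.a, St.a, St.c, St.c, St.c, St.c, St.c, St.c, St.c], [St.a, St.a, St.a, St.a, St.a, St.a, St.a, St.a, St.a, St.c, St.c, St.c]),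
  ([St.c, St.c, St.c, St.c, St.c, St.c, St.c, St.c, St.c, St.c, St.c, St.c, St.c, St.c, St.c, St.c, St.c, St.b, St.b, St.b, St.b, St.b, St.b, St.b], [St.c, St.c, St.c, St.c, St.c, St.c, St.c, St.c, St.c, St.b, St.b, St.b]),
  ([St.b, St.b, St.b, St.b, St.b, St.b, St.b, St.b, St.b, St.b, St.c, St.c, St.c, St.c, St.c, St.c, St.c, St.a, St.c, St.c, St.c, St.c, St.c, St.c], [St.b, St.b, St.b, St.b, St.b, St.b, St.c, St.c, St.c, St.a, St.c, St.c]),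
  ([St.c, St.c, St.c, St.c, St.c, St.c, St.c, St.c, St.c, St.c, St.a, St.a, St.a, St.a, St.a, St.a, St.a, St.c, St.b, St.b, St.b, St.b, St.b, St.b], [St.c, St.c, St.c, St.c, St.c, St.c, St.a, St.a, St.a, St.c, St.b, St.b]),
  ([St.b, St.b, St.b, St.b, St.b, St.b, St.b, St.b, St.b, St.b, St.b, St.b, St.b, St.b, St.b, St.b, St.b, St.c, St.a, St.a, St.a, St.a, St.a, St.a], [St.b, St.b, St.b, St.b, St.b, St.b, St.b, St.b, St.b, St.c, St.a, St.a]),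
  ([St.c, St.c, St.c, St.c, St.c, St.c, St.c, St.c, St.c, St.c, St.c, St.c, St.c, St.c, St.c, St.c, St.c, St.a, St.c, St.c, St.c, St.c, St.c, St.c], [St.c, St.c, St.c, St.c, St.c, St.c, St.c, St.c, St.c, St.a, St.c, St.c]),
  ([St.a, St.a, St.a, St.a, St.a, St.a, St.a, St.a, St.a, St.a, St.a, St.a, St.a, St.a, St.a, St.a, St.a, St.c, St.b, St.b, St.b, St.b, St.b, St.b], [St.a, St.a, St.a, St.a, St.a, St.a, St.a, St.a, St.a, St.c, St.b, St.b])]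
def sL : List St := [St.b, St.b, St.b, St.b, St.c, St.a]
def tL : List St := [St.c, St.c, St.c, St.a, St.c, St.b]
def s2L : List St := [St.b, St.b, St.b, St.b, St.b, St.b, St.c, St.c, St.c, St.a, St.c, St.c]
def t2L : List St := [St.c, St.c, St.c, St.c, St.c, St.a, St.c, St.c, St.c, St.b, St.b, St.b]
def eL : List St := sL ++ tL

theorem coe_g (w : ℕ → Bool) : (a * c * a * c * b * c) w = actL gL w := rfl

set_option maxHeartbeats 4000000 in
theorem R_closed : ∀ p ∈ R, ∀ x : Bool,
    (step p.1 x).2 = (step p.2 x).2 ∧ ((step p.1 x).1, (step p.2 x).1) ∈ R := by decide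

theorem key_bisim (w : ℕ → Bool) : actL (s2L ++ t2L) w = actL eL w := by
  funext n
  exact bisim R R_closed n (s2L ++ t2L, eL) (by decide) w

/-- the restriction map E. -/
def E : (ℕ → Bool) → ℕ → Bool := actL eL

theorem g00 (w : ℕ → Bool) :
    actL gL (cat [false, false] w) = cat [false, true] (actL sL w) := by
  rw [actL_cat2]; rfl

theorem g01 (w : ℕ → Bool) :
    actL gL (cat [false, true] w) = cat [false, false] (actL tL w) := by
  rw [actL_cat2]; rfl

theorem E00 (w : ℕ → Bool) :
    E (cat [false, false] w) = cat [false, true] (actL s2L w) := by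
  rw [show E (cat [false, false] w) = actL eL (cat [false, false] w) from rfl, actL_cat2]; rfl

theorem E01 (w : ℕ → Bool) :
    E (cat [false, true] w) = cat [false, false] (actL t2L w) := by
  rw [show E (cat [false, true] w) = actL eL (cat [false, true] w) from rfl, actL_cat2]; rfl

theorem gsq (w : ℕ → Bool) :
    actL gL (actL gL (cat [false, false] w)) = cat [false, false] (E w) := by
  rw [g00, g01, ← actL_append]; rfl

theorem Esq (w : ℕ → Bool) :
    E (E (cat [false, false] w)) = cat [false, false] (E w) := by
  rw [E00, E01, ← actL_append, key_bisim]
  rfl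

/-- the zero word. -/
def z : ℕ → Bool := fun _ => false

theorem z_cat : cat [false, false] z = z := by
  funext n
  match n with
  | 0 => rfl
  | 1 => rfl
  | (n+2) => rw [cat2_two]; rfl

theorem E_even : ∀ (m : ℕ) (w : ℕ → Bool),
    E^[2 * m] (cat [false, false] w) = cat [false, false] (E^[m] w) := by
  intro m
  induction m with
  | zero => intro w; rfl
  | succ m ih =>
    intro w
    have h2 : 2 * (m + 1) = 2 * m + 2 := by ring
    rw [h2, Function.iterate_add_apply, show E^[2] (cat [false, false] w)
      = E (E (cat [false, false] w)) from rfl, Esq, ih, ← Function.iterate_succ_apply]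

theorem E_ne : ∀ n, 1 ≤ n → E^[n] z ≠ z := by
  intro n
  induction n using Nat.strong_induction_on with
  | _ n ih =>
    intro hn
    rcases Nat.even_or_odd n with ⟨m, hm⟩ | ⟨m, hm⟩
    · -- n = 2m, m ≥ 1
      have hm' : n = 2 * m := by omega
      have hm1 : 1 ≤ m := by omega
      intro hEq
      apply ih m (by omega) hm1
      apply cat2_inj (x := false) (y := false)
      have h2 : E^[n] z = cat [false, false] (E^[m] z) := by
        calc E^[n] z = E^[2 * m] (cat [false, false] z) := by rw [hm', z_cat]
          _ = cat [false, false] (E^[m] z) := E_even m z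
      rw [← h2, hEq, z_cat]
    · -- n = 2m+1
      intro hEq
      have h1 : E^[n] z 1 = true := by
        have hstep : E^[2 * m + 1] z = E (E^[2 * m] z) :=
          Function.iterate_succ_apply' E (2 * m) z
        calc E^[n] z 1 = E (E^[2 * m] (cat [false, false] z)) 1 := by
              rw [hm, hstep, z_cat]
          _ = E (cat [false, false] (E^[m] z)) 1 := by rw [E_even]
          _ = true := by rw [E00]; rfl
      rw [hEq] at h1
      exact Bool.noConfusion h1

theorem g_even : ∀ (m : ℕ) (w : ℕ → Bool),
    (actL gL)^[2 * m] (cat [false, false] w) = cat [false, false] (E^[m] w) := by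
  intro m
  induction m with
  | zero => intro w; rfl
  | succ m ih =>
    intro w
    have h2 : 2 * (m + 1) = 2 * m + 2 := by ring
    rw [h2, Function.iterate_add_apply, show (actL gL)^[2] (cat [false, false] w)
      = actL gL (actL gL (cat [false, false] w)) from rfl, gsq, ih,
      ← Function.iterate_succ_apply]

theorem g_ne : ∀ n, 1 ≤ n → (actL gL)^[n] z ≠ z := by
  intro n hn
  rcases Nat.even_or_odd n with ⟨m, hm⟩ | ⟨m, hm⟩
  · have hm' : n = 2 * m := by omega
    have hm1 : 1 ≤ m := by omega
    intro hEq
    apply E_ne m hm1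
    apply cat2_inj (x := false) (y := false)
    have h2 : (actL gL)^[n] z = cat [false, false] (E^[m] z) := by
      calc (actL gL)^[n] z = (actL gL)^[2 * m] (cat [false, false] z) := by rw [hm', z_cat]
        _ = cat [false, false] (E^[m] z) := g_even m z
    rw [← h2, hEq, z_cat]
  · intro hEq
    have h1 : (actL gL)^[n] z 1 = true := by
      have hstep : (actL gL)^[2 * m + 1] z = actL gL ((actL gL)^[2 * m] z) :=
        Function.iterate_succ_apply' (actL gL) (2 * m) z
      calc (actL gL)^[n] z 1 = actL gL ((actL gL)^[2 * m] (cat [false, false] z)) 1 := by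
            rw [hm, hstep, z_cat]
        _ = actL gL (cat [false, false] (E^[m] z)) 1 := by rw [g_even]
        _ = true := by rw [g00]; rfl
    rw [hEq] at h1
    exact Bool.noConfusion h1

theorem g_fix11 (w : ℕ → Bool) :
    (a * c * a * c * b * c) (cat [true, true] w) =
      cat [true, true] ((a * c * a * c * b * c) w) := by
  rw [coe_g, coe_g, actL_cat2]
  rfl

theorem coe_g_pow (n : ℕ) (w : ℕ → Bool) :
    ((a * c * a * c * b * c) ^ n) w = (actL gL)^[n] w := by
  induction n generalizing w with
  | zero => rfl
  | succ n ih =>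
    rw [pow_succ, Equiv.Perm.mul_apply, Function.iterate_succ_apply, ← coe_g, ih]

theorem g_pow_ne (n : ℕ) (hn : 1 ≤ n) : (a * c * a * c * b * c) ^ n ≠ 1 := by
  intro h
  apply g_ne n hn
  have h2 : ((a * c * a * c * b * c) ^ n) z = z := by rw [h]; rfl
  exact (coe_g_pow n z).symm.trans h2

/-! ### restriction along 1ⁿ -/

theorem resW_replicate (f : Equiv.Perm (ℕ → Bool))
    (hf : ∀ w, f (cat [true, true] w) = cat [true, true] (f w)) :
    ∀ i, resW ⇑f (List.replicate (2 * i) true) = ⇑f := by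
  intro i
  induction i with
  | zero =>
    funext w n
    show f (cat [] w) (n + 0) = f w n
    rw [cat_nil]
    rfl

  | succ i ih =>
    funext w n
    have hrep : List.replicate (2 * (i + 1)) true
        = [true, true] ++ List.replicate (2 * i) true := by
      have : 2 * (i + 1) = 2 + 2 * i := by ring
      rw [this, List.replicate_add]
      rfl
    show f (cat (List.replicate (2 * (i+1)) true) w)
        (n + (List.replicate (2 * (i+1)) true).length) = f w n
    rw [hrep, cat_append, hf]
    have hlen : (([true, true] ++ List.replicate (2 * i) true)).length
        = (List.replicate (2 * i) true).length + 2 := by simp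
    rw [hlen, ← Nat.add_assoc, cat2_two]
    have := congrFun (congrFun ih (w)) n
    exact this

theorem g_pow_fix11 (j : ℕ) (w : ℕ → Bool) :
    ((a * c * a * c * b * c) ^ j) (cat [true, true] w) =
      cat [true, true] (((a * c * a * c * b * c) ^ j) w) := by
  induction j generalizing w with
  | zero => rfl
  | succ j ih =>
    rw [pow_succ]
    show ((a * c * a * c * b * c) ^ j) ((a * c * a * c * b * c) (cat [true, true] w))
      = cat [true, true] (((a * c * a * c * b * c) ^ j) ((a * c * a * c * b * c) w))
    rw [g_fix11, ih]

/-- The automaton group of automaton 882 is non-contracting: `g = acacbc` satisfies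
`g(11) = 11`, `g|₁₁ = g`, and `g` has infinite order. -/
theorem automaton882_noncontracting :
    (∀ w : ℕ → Bool, (a * c * a * c * b * c) (cat [true, true] w) =
      cat [true, true] ((a * c * a * c * b * c) w)) ∧
    (∀ n : ℕ, 1 ≤ n → (a * c * a * c * b * c) ^ n ≠ 1) ∧
    ¬ ∃ N : Finset (Equiv.Perm (ℕ → Bool)),
      ∀ g ∈ Subgroup.closure ({a, b, c} : Set (Equiv.Perm (ℕ → Bool))),
        ∃ k : ℕ, ∀ u : List Bool, k ≤ u.length → ∃ m ∈ N, resW ⇑g u = ⇑m := by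
  refine ⟨g_fix11, fun n hn => g_pow_ne n hn, ?_⟩
  rintro ⟨N, hN⟩
  have ha : a ∈ Subgroup.closure ({a, b, c} : Set (Equiv.Perm (ℕ → Bool))) :=
    Subgroup.subset_closure (by simp)
  have hb : b ∈ Subgroup.closure ({a, b, c} : Set (Equiv.Perm (ℕ → Bool))) :=
    Subgroup.subset_closure (by simp)
  have hc : c ∈ Subgroup.closure ({a, b, c} : Set (Equiv.Perm (ℕ → Bool))) :=
    Subgroup.subset_closure (by simp)
  have hg : a * c * a * c * b * c ∈
      Subgroup.closure ({a, b, c} : Set (Equiv.Perm (ℕ → Bool))) :=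
    mul_mem (mul_mem (mul_mem (mul_mem (mul_mem ha hc) ha) hc) hb) hc
  have hkey : ∀ j : ℕ, ∃ m ∈ N, ⇑((a * c * a * c * b * c) ^ j) = ⇑m := by
    intro j
    obtain ⟨k, hk⟩ := hN ((a * c * a * c * b * c) ^ j) (pow_mem hg j)
    obtain ⟨m, hm, hmeq⟩ := hk (List.replicate (2 * k) true)
      (by rw [List.length_replicate]; omega)
    exact ⟨m, hm, by rw [← resW_replicate _ (g_pow_fix11 j) k, hmeq]⟩
  choose φ hφ hφeq using hkey
  have : ∃ j1 j2 : ℕ, j1 ≠ j2 ∧ (⟨φ j1, hφ j1⟩ : ↥N) = ⟨φ j2, hφ j2⟩ := by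
    obtain ⟨j1, j2, hne, heq⟩ :=
      Finite.exists_ne_map_eq_of_infinite (fun j : ℕ => (⟨φ j, hφ j⟩ : ↥N))
    exact ⟨j1, j2, hne, heq⟩
  obtain ⟨j1, j2, hne, heq⟩ := this
  have hpeq : (a * c * a * c * b * c) ^ j1 = (a * c * a * c * b * c) ^ j2 := by
    apply Equiv.coe_fn_injective
    have hval : φ j1 = φ j2 := congrArg Subtype.val heq
    show ⇑((a * c * a * c * b * c) ^ j1) = ⇑((a * c * a * c * b * c) ^ j2)
    rw [hφeq j1, hφeq j2, hval]
  rcases hne.lt_or_gt with hlt | hlt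
  · apply g_pow_ne (j2 - j1) (by omega)
    have : (a * c * a * c * b * c) ^ j1 * (a * c * a * c * b * c) ^ (j2 - j1)
        = (a * c * a * c * b * c) ^ j1 * 1 := by
      rw [← pow_add, mul_one, show j1 + (j2 - j1) = j2 by omega, hpeq]
    exact mul_left_cancel this
  · apply g_pow_ne (j1 - j2) (by omega)
    have : (a * c * a * c * b * c) ^ j2 * (a * c * a * c * b * c) ^ (j1 - j2)
        = (a * c * a * c * b * c) ^ j2 * 1 := by
      rw [← pow_add, mul_one, show j2 + (j1 - j2) = j1 by omega, ← hpeq]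
    exact mul_left_cancel this

end Stmt10
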